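/- arXiv:2206.02834 — 6 statements merged into one kernel-verified Lean document; each statement's English description precedes it below -/
import Mathlib

section
/- Let μ: ℝ → ℝ be continuously differentiable with derivative μ̇, let Θ ⊆ ℝ^d be convex, let S be a finite set of vectors in ℝ^d, let m_a > 0 for each a ∈ S, and suppose Ṽ = Σ_{a∈S} m_a a a' is positive definite. Assume there exist constants 0 < k₁ ≤ k₂ such that k₁ ≤ μ̇(⟨θ, a⟩) ≤ k₂ for all θ ∈ Θ and all a ∈ S. Define h(θ) = Σ_{a∈S} m_a μ(⟨θ, a⟩) a. Then for any θ₁, θ₂ ∈ Θ there exists a symmetric positive-definite d × d matrix G satisfying k₁ Ṽ ≼ G ≼ k₂ Ṽ in the Loewner order and h(θ₁) − h(θ₂) = G (θ₁ − θ₂). -/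
open Matrix

private lemma vecMulVec_mulVec' {d : ℕ} (a x : Fin d → ℝ) :
    vecMulVec a a *ᵥ x = (a ⬝ᵥ x) • a := by
  ext i
  simp [mulVec, vecMulVec_apply, dotProduct, Finset.mul_sum, mul_assoc, mul_comm, mul_left_comm]

private lemma sum_mulVec' {d : ℕ} {γ : Type*} (S : Finset γ)
    (M : γ → Matrix (Fin d) (Fin d) ℝ) (x : Fin d → ℝ) :
    (∑ a ∈ S, M a) *ᵥ x = ∑ a ∈ S, M a *ᵥ x := by
  classical
  induction S using Finset.induction with
  | empty => simp [mulVec]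
  | insert _ _ h ih => rw [Finset.sum_insert h, Finset.sum_insert h, add_mulVec, ih]

private lemma dotProduct_sum' {d : ℕ} {γ : Type*} (S : Finset γ)
    (x : Fin d → ℝ) (v : γ → Fin d → ℝ) :
    x ⬝ᵥ (∑ a ∈ S, v a) = ∑ a ∈ S, x ⬝ᵥ v a := by
  classical
  induction S using Finset.induction with
  | empty => simp
  | insert _ _ h ih => rw [Finset.sum_insert h, Finset.sum_insert h, dotProduct_add, ih]

private lemma aux_psd {d : ℕ} (S : Finset (Fin d → ℝ)) (c : (Fin d → ℝ) → ℝ)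
    (hc : ∀ a ∈ S, 0 ≤ c a) : (∑ a ∈ S, c a • vecMulVec a a).PosSemidef := by
  rw [posSemidef_iff_dotProduct_mulVec]
  constructor
  · show _ = _
    rw [conjTranspose_sum]
    refine Finset.sum_congr rfl fun a _ => ?_
    ext i j
    simp [conjTranspose_apply, vecMulVec_apply, mul_comm]
  · intro x
    simp only [star_trivial]
    rw [sum_mulVec', dotProduct_sum']
    refine Finset.sum_nonneg fun a ha => ?_
    rw [smul_mulVec, vecMulVec_mulVec', dotProduct_smul, dotProduct_smul, smul_eq_mul,
      smul_eq_mul, dotProduct_comm]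
    nlinarith [hc a ha, sq_nonneg (a ⬝ᵥ x)]

/-- Mean value theorem for the map `h(θ) = Σ_{a∈S} m_a μ(⟨θ,a⟩) a`: for
`θ₁, θ₂` in a convex set `Θ` there is a symmetric positive-definite matrix `G` with
`k₁ Ṽ ≼ G ≼ k₂ Ṽ` and `h(θ₁) − h(θ₂) = G (θ₁ − θ₂)`. -/
theorem stmt4 (d : ℕ) (μ : ℝ → ℝ) (hμ : ContDiff ℝ 1 μ)
    (Θ : Set (Fin d → ℝ)) (hΘ : Convex ℝ Θ)
    (S : Finset (Fin d → ℝ)) (m : (Fin d → ℝ) → ℝ) (hm : ∀ a ∈ S, 0 < m a)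
    (Vt : Matrix (Fin d) (Fin d) ℝ)
    (hVt_def : Vt = ∑ a ∈ S, m a • vecMulVec a a) (hVt : Vt.PosDef)
    (k₁ k₂ : ℝ) (hk₁ : 0 < k₁) (hk₁₂ : k₁ ≤ k₂)
    (hderiv : ∀ θ ∈ Θ, ∀ a ∈ S, k₁ ≤ deriv μ (θ ⬝ᵥ a) ∧ deriv μ (θ ⬝ᵥ a) ≤ k₂)
    (h : (Fin d → ℝ) → (Fin d → ℝ))
    (h_def : ∀ θ, h θ = ∑ a ∈ S, (m a * μ (θ ⬝ᵥ a)) • a)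
    (θ₁ θ₂ : Fin d → ℝ) (hθ₁ : θ₁ ∈ Θ) (hθ₂ : θ₂ ∈ Θ) :
    ∃ G : Matrix (Fin d) (Fin d) ℝ, G.IsSymm ∧ G.PosDef ∧
      (G - k₁ • Vt).PosSemidef ∧ (k₂ • Vt - G).PosSemidef ∧
      h θ₁ - h θ₂ = G *ᵥ (θ₁ - θ₂) := by
  -- the averaged derivative along the segment
  set c : (Fin d → ℝ) → ℝ :=
    fun a => ∫ t in (0:ℝ)..1, deriv μ ((θ₂ + t • (θ₁ - θ₂)) ⬝ᵥ a) with hc_def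
  have hμdiff : Differentiable ℝ μ := hμ.differentiable one_ne_zero
  have hμ'cont : Continuous (deriv μ) := (hμ.iterate_deriv' 0 1).continuous
  have hmem : ∀ t ∈ Set.Icc (0:ℝ) 1, θ₂ + t • (θ₁ - θ₂) ∈ Θ := fun t ht =>
    hΘ.add_smul_sub_mem hθ₂ hθ₁ ht
  have hdot : ∀ (t : ℝ) (a : Fin d → ℝ),
      (θ₂ + t • (θ₁ - θ₂)) ⬝ᵥ a = θ₂ ⬝ᵥ a + ((θ₁ - θ₂) ⬝ᵥ a) * t := by
    intro t a
    rw [add_dotProduct, smul_dotProduct, smul_eq_mul, mul_comm]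
  -- continuity of the integrand
  have hcont : ∀ a : Fin d → ℝ,
      Continuous fun t : ℝ => deriv μ ((θ₂ + t • (θ₁ - θ₂)) ⬝ᵥ a) := by
    intro a
    have : Continuous fun t : ℝ => (θ₂ + t • (θ₁ - θ₂)) ⬝ᵥ a := by
      simp only [hdot]
      exact continuous_const.add (continuous_const.mul continuous_id)
    exact hμ'cont.comp this
  have hint : ∀ a : Fin d → ℝ,
      IntervalIntegrable (fun t : ℝ => deriv μ ((θ₂ + t • (θ₁ - θ₂)) ⬝ᵥ a))
        MeasureTheory.volume 0 1 :=
    fun a => (hcont a).intervalIntegrable 0 1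
  -- bounds on c a
  have hc_lb : ∀ a ∈ S, k₁ ≤ c a := by
    intro a ha
    have : (∫ _ in (0:ℝ)..1, k₁) ≤ c a := by
      apply intervalIntegral.integral_mono_on zero_le_one intervalIntegrable_const (hint a)
      intro t ht
      exact (hderiv _ (hmem t ht) a ha).1
    simpa using this
  have hc_ub : ∀ a ∈ S, c a ≤ k₂ := by
    intro a ha
    have : c a ≤ (∫ _ in (0:ℝ)..1, k₂) := by
      apply intervalIntegral.integral_mono_on zero_le_one (hint a) intervalIntegrable_const
      intro t ht
      exact (hderiv _ (hmem t ht) a ha).2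
    simpa using this
  -- mean value identity
  have hmvt : ∀ a : Fin d → ℝ, μ (θ₁ ⬝ᵥ a) - μ (θ₂ ⬝ᵥ a) = c a * ((θ₁ - θ₂) ⬝ᵥ a) := by
    intro a
    have hline : ∀ t : ℝ, HasDerivAt (fun s : ℝ => (θ₂ + s • (θ₁ - θ₂)) ⬝ᵥ a)
        ((θ₁ - θ₂) ⬝ᵥ a) t := by
      intro t
      have e : (fun s : ℝ => (θ₂ + s • (θ₁ - θ₂)) ⬝ᵥ a)
          = fun s : ℝ => θ₂ ⬝ᵥ a + ((θ₁ - θ₂) ⬝ᵥ a) * s := by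
        funext s; exact hdot s a
      rw [e]
      simpa using ((hasDerivAt_id t).const_mul ((θ₁ - θ₂) ⬝ᵥ a)).const_add (θ₂ ⬝ᵥ a)
    have hcomp : ∀ t ∈ Set.uIcc (0:ℝ) 1,
        HasDerivAt (fun s : ℝ => μ ((θ₂ + s • (θ₁ - θ₂)) ⬝ᵥ a))
          (deriv μ ((θ₂ + t • (θ₁ - θ₂)) ⬝ᵥ a) * ((θ₁ - θ₂) ⬝ᵥ a)) t := by
      intro t _
      exact (hμdiff _).hasDerivAt.comp t (hline t)
    have hint' : IntervalIntegrable
        (fun t : ℝ => deriv μ ((θ₂ + t • (θ₁ - θ₂)) ⬝ᵥ a) * ((θ₁ - θ₂) ⬝ᵥ a))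
        MeasureTheory.volume 0 1 := ((hcont a).mul continuous_const).intervalIntegrable 0 1
    have key := intervalIntegral.integral_eq_sub_of_hasDerivAt hcomp hint'
    rw [intervalIntegral.integral_mul_const] at key
    have e1 : θ₂ + (1:ℝ) • (θ₁ - θ₂) = θ₁ := by
      rw [one_smul]; abel
    have e0 : θ₂ + (0:ℝ) • (θ₁ - θ₂) = θ₂ := by
      rw [zero_smul, add_zero]
    rw [e1, e0] at key
    rw [← key]
  refine ⟨∑ a ∈ S, (m a * c a) • vecMulVec a a, ?_, ?_, ?_, ?_, ?_⟩
  case refine_3 =>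
    have e : (∑ a ∈ S, (m a * c a) • vecMulVec a a) - k₁ • Vt
        = ∑ a ∈ S, (m a * (c a - k₁)) • vecMulVec a a := by
      rw [hVt_def, Finset.smul_sum, ← Finset.sum_sub_distrib]
      refine Finset.sum_congr rfl fun a _ => ?_
      rw [smul_smul, ← sub_smul]
      ring_nf
    rw [e]
    exact aux_psd S _ fun a ha => mul_nonneg (hm a ha).le (sub_nonneg.2 (hc_lb a ha))
  case refine_4 =>
    have e : k₂ • Vt - (∑ a ∈ S, (m a * c a) • vecMulVec a a)
        = ∑ a ∈ S, (m a * (k₂ - c a)) • vecMulVec a a := by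
      rw [hVt_def, Finset.smul_sum, ← Finset.sum_sub_distrib]
      refine Finset.sum_congr rfl fun a _ => ?_
      rw [smul_smul, ← sub_smul]
      ring_nf
    rw [e]
    exact aux_psd S _ fun a ha => mul_nonneg (hm a ha).le (sub_nonneg.2 (hc_ub a ha))
  case refine_2 =>
    have hpsd : ((∑ a ∈ S, (m a * c a) • vecMulVec a a) - k₁ • Vt).PosSemidef := by
      have e : (∑ a ∈ S, (m a * c a) • vecMulVec a a) - k₁ • Vt
          = ∑ a ∈ S, (m a * (c a - k₁)) • vecMulVec a a := by
        rw [hVt_def, Finset.smul_sum, ← Finset.sum_sub_distrib]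
        refine Finset.sum_congr rfl fun a _ => ?_
        rw [smul_smul, ← sub_smul]
        ring_nf
      rw [e]
      exact aux_psd S _ fun a ha => mul_nonneg (hm a ha).le (sub_nonneg.2 (hc_lb a ha))
    have hk₁Vt : (k₁ • Vt).PosDef := by
      refine posDef_iff_dotProduct_mulVec.mpr ⟨?_, fun x hx => ?_⟩
      · show _ = _
        rw [conjTranspose_smul, hVt.isHermitian.eq]
        simp
      · rw [smul_mulVec, dotProduct_smul, smul_eq_mul]
        exact mul_pos hk₁ (hVt.dotProduct_mulVec_pos hx)
    have := hk₁Vt.add_posSemidef hpsd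
    simpa using this
  case refine_1 =>
    exact (aux_psd S _ fun a ha =>
      mul_nonneg (hm a ha).le (le_trans hk₁.le (hc_lb a ha))).isHermitian
  case refine_5 =>
    rw [sum_mulVec', h_def, h_def, ← Finset.sum_sub_distrib]
    refine Finset.sum_congr rfl fun a ha => ?_
    rw [smul_mulVec, vecMulVec_mulVec', ← sub_smul, smul_smul, dotProduct_comm a (θ₁ - θ₂)]
    congr 1
    linear_combination m a * hmvt a
end

section
/- Let μ: ℝ → ℝ be continuously differentiable with derivative μ̇, let Θ ⊆ ℝ^d be convex, let S be a finite set of vectors in ℝ^d, let m_a > 0 for each a ∈ S, and suppose Ṽ = Σ_{a∈S} m_a a a' is positive definite. Assume there exists k₁ > 0 such that μ̇(⟨θ, a⟩) ≥ k₁ for all θ ∈ Θ and all a ∈ S, and define h(θ) = Σ_{a∈S} m_a μ(⟨θ, a⟩) a. Then for all θ₁, θ₂ ∈ Θ with θ₁ ≠ θ₂ one has ⟨θ₁ − θ₂, h(θ₁) − h(θ₂)⟩ > 0; in particular, h is injective on Θ. -/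
open Matrix

theorem quadform_aux (d : ℕ) (S : Finset (Fin d → ℝ)) (m : (Fin d → ℝ) → ℝ) (u : Fin d → ℝ) :
    u ⬝ᵥ (∑ a ∈ S, m a • vecMulVec a a) *ᵥ u = ∑ a ∈ S, m a * (u ⬝ᵥ a)^2 := by
  induction S using Finset.induction with
  | empty => simp
  | @insert a s hnot ih =>
    rw [Finset.sum_insert hnot, Finset.sum_insert hnot, Matrix.add_mulVec, dotProduct_add, ih,
      Matrix.smul_mulVec, dotProduct_smul]
    have hv : vecMulVec a a *ᵥ u = (a ⬝ᵥ u) • a := by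
      funext i
      simp only [Matrix.mulVec, Matrix.vecMulVec_apply, dotProduct, Pi.smul_apply, smul_eq_mul,
        Finset.mul_sum]
      rw [Finset.sum_mul]
      exact Finset.sum_congr rfl fun j _ => by ring
    rw [hv, dotProduct_smul, dotProduct_comm]
    simp only [smul_eq_mul]
    ring_nf

theorem mvt_bound_aux (μ : ℝ → ℝ) (hμ : ContDiff ℝ 1 μ) (k₁ : ℝ) (x y : ℝ)
    (hb : ∀ t ∈ Set.Icc (0:ℝ) 1, k₁ ≤ deriv μ (y + t * (x - y))) :
    k₁ * (x - y)^2 ≤ (μ x - μ y) * (x - y) := by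
  have hc : Continuous μ := hμ.continuous
  have hd : Differentiable ℝ μ := hμ.differentiable one_ne_zero
  rcases lt_trichotomy x y with hxy | hxy | hxy
  · obtain ⟨c, hcI, hcs⟩ := exists_deriv_eq_slope μ hxy hc.continuousOn hd.differentiableOn
    have hne : x - y ≠ 0 := sub_ne_zero.mpr hxy.ne
    have hμc : μ y - μ x = deriv μ c * (y - x) := by
      rw [hcs, div_mul_cancel₀ _ (sub_ne_zero.mpr hxy.ne')]
    have heq : (c - y) / (x - y) = (y - c) / (y - x) := by
      rw [show c - y = -(y - c) by ring, show x - y = -(y - x) by ring, neg_div_neg_eq]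
    have ht : (c - y) / (x - y) ∈ Set.Icc (0:ℝ) 1 := by
      rw [heq]
      constructor
      · exact div_nonneg (by linarith [hcI.2]) (by linarith)
      · rw [div_le_one (by linarith)]; linarith [hcI.1]
    have hk := hb _ ht
    have hcc : y + (c - y) / (x - y) * (x - y) = c := by
      rw [div_mul_cancel₀ _ hne]; ring
    rw [hcc] at hk
    nlinarith [sq_nonneg (x - y)]
  · subst hxy; simp
  · obtain ⟨c, hcI, hcs⟩ := exists_deriv_eq_slope μ hxy hc.continuousOn hd.differentiableOn
    have hne : x - y ≠ 0 := sub_ne_zero.mpr hxy.ne'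
    have hμc : μ x - μ y = deriv μ c * (x - y) := by
      rw [hcs, div_mul_cancel₀ _ hne]
    have ht : (c - y) / (x - y) ∈ Set.Icc (0:ℝ) 1 := by
      constructor
      · exact div_nonneg (by linarith [hcI.1]) (by linarith)
      · rw [div_le_one (by linarith)]; linarith [hcI.2]
    have hk := hb _ ht
    have hcc : y + (c - y) / (x - y) * (x - y) = c := by
      rw [div_mul_cancel₀ _ hne]; ring
    rw [hcc] at hk
    nlinarith

theorem dot_sum_aux (d : ℕ) (S : Finset (Fin d → ℝ)) (f : (Fin d → ℝ) → ℝ) (u : Fin d → ℝ) :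
    u ⬝ᵥ (∑ a ∈ S, f a • a) = ∑ a ∈ S, f a * (u ⬝ᵥ a) := by
  induction S using Finset.induction with
  | empty => simp
  | @insert a s hnot ih =>
    rw [Finset.sum_insert hnot, Finset.sum_insert hnot, dotProduct_add, ih, dotProduct_smul,
      smul_eq_mul]

/-- If the link function has derivative bounded below by `k₁ > 0` along
`⟨θ, a⟩` for `θ ∈ Θ`, `a ∈ S`, then `h(θ) = Σ_{a∈S} m_a μ(⟨θ,a⟩) a` is strictly monotone
(`⟨θ₁ − θ₂, h(θ₁) − h(θ₂)⟩ > 0` for `θ₁ ≠ θ₂`) and hence injective on `Θ`. -/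
theorem stmt5 (d : ℕ) (μ : ℝ → ℝ) (hμ : ContDiff ℝ 1 μ)
    (Θ : Set (Fin d → ℝ)) (hΘ : Convex ℝ Θ)
    (S : Finset (Fin d → ℝ)) (m : (Fin d → ℝ) → ℝ) (hm : ∀ a ∈ S, 0 < m a)
    (Vt : Matrix (Fin d) (Fin d) ℝ)
    (hVt_def : Vt = ∑ a ∈ S, m a • vecMulVec a a) (hVt : Vt.PosDef)
    (k₁ : ℝ) (hk₁ : 0 < k₁)
    (hderiv : ∀ θ ∈ Θ, ∀ a ∈ S, k₁ ≤ deriv μ (θ ⬝ᵥ a))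
    (h : (Fin d → ℝ) → (Fin d → ℝ))
    (h_def : ∀ θ, h θ = ∑ a ∈ S, (m a * μ (θ ⬝ᵥ a)) • a) :
    (∀ θ₁ ∈ Θ, ∀ θ₂ ∈ Θ, θ₁ ≠ θ₂ → 0 < (θ₁ - θ₂) ⬝ᵥ (h θ₁ - h θ₂)) ∧
    Set.InjOn h Θ := by
  have key : ∀ θ₁ ∈ Θ, ∀ θ₂ ∈ Θ, θ₁ ≠ θ₂ → 0 < (θ₁ - θ₂) ⬝ᵥ (h θ₁ - h θ₂) := by
    intro θ₁ hθ₁ θ₂ hθ₂ hne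
    set u := θ₁ - θ₂ with hu_def
    have hu : u ≠ 0 := sub_ne_zero.mpr hne
    have hpos : 0 < u ⬝ᵥ Vt *ᵥ u := by simpa using hVt.dotProduct_mulVec_pos hu
    rw [hVt_def, quadform_aux] at hpos
    have hexp : u ⬝ᵥ (h θ₁ - h θ₂)
        = ∑ a ∈ S, m a * ((μ (θ₁ ⬝ᵥ a) - μ (θ₂ ⬝ᵥ a)) * (u ⬝ᵥ a)) := by
      rw [dotProduct_sub, h_def, h_def, dot_sum_aux, dot_sum_aux, ← Finset.sum_sub_distrib]
      exact Finset.sum_congr rfl fun a _ => by ring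
    rw [hexp]
    have hterm : ∀ a ∈ S, k₁ * (m a * (u ⬝ᵥ a)^2)
        ≤ m a * ((μ (θ₁ ⬝ᵥ a) - μ (θ₂ ⬝ᵥ a)) * (u ⬝ᵥ a)) := by
      intro a ha
      have hua : u ⬝ᵥ a = θ₁ ⬝ᵥ a - θ₂ ⬝ᵥ a := by rw [hu_def, sub_dotProduct]
      have hb : ∀ t ∈ Set.Icc (0:ℝ) 1,
          k₁ ≤ deriv μ (θ₂ ⬝ᵥ a + t * (θ₁ ⬝ᵥ a - θ₂ ⬝ᵥ a)) := by
        intro t htI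
        have hmem : (1 - t) • θ₂ + t • θ₁ ∈ Θ :=
          hΘ hθ₂ hθ₁ (by linarith [htI.2]) htI.1 (by ring)
        have := hderiv _ hmem a ha
        have harg : ((1 - t) • θ₂ + t • θ₁) ⬝ᵥ a = θ₂ ⬝ᵥ a + t * (θ₁ ⬝ᵥ a - θ₂ ⬝ᵥ a) := by
          rw [add_dotProduct, smul_dotProduct, smul_dotProduct, smul_eq_mul, smul_eq_mul]
          ring
        rwa [harg] at this
      have hmvt := mvt_bound_aux μ hμ k₁ (θ₁ ⬝ᵥ a) (θ₂ ⬝ᵥ a) hb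
      rw [hua]
      have hma := hm a ha
      nlinarith [hmvt]
    calc (0:ℝ) < k₁ * ∑ a ∈ S, m a * (u ⬝ᵥ a)^2 := by positivity
    _ = ∑ a ∈ S, k₁ * (m a * (u ⬝ᵥ a)^2) := Finset.mul_sum _ _ _
    _ ≤ _ := Finset.sum_le_sum hterm
  refine ⟨key, ?_⟩
  intro θ₁ hθ₁ θ₂ hθ₂ heq
  by_contra hne
  have := key θ₁ hθ₁ θ₂ hθ₂ hne
  rw [heq] at this
  simp at this
end

section
/- Let (Ω, F) be a measurable space, let P₁ and P₂ be probability measures on it, and let α ∈ (0,1). If the total variation distance satisfies δ(P₁, P₂) = α/(1−α), then there exist probability measures Q₁ and Q₂ on (Ω, F) such that (1−α) P₁ + α Q₁ = (1−α) P₂ + α Q₂ as measures. Explicitly, one may take Q₁ = ((1−α)/α) · (P₂ − P₁)⁺ and Q₂ = ((1−α)/α) · (P₁ − P₂)⁺, where (P₂ − P₁)⁺ and (P₁ − P₂)⁺ are the positive parts in the Jordan decomposition of the signed measure P₂ − P₁. -/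
open MeasureTheory

/-- The total variation distance `δ(P,Q) = sup_{A measurable} |P(A) − Q(A)|`. -/
noncomputable def tvDist {Ω : Type} [MeasurableSpace Ω] (P Q : Measure Ω) : ℝ :=
  ⨆ A : {A : Set Ω // MeasurableSet A}, |(P A.1).toReal - (Q A.1).toReal|

/-- If `δ(P₁, P₂) = α/(1−α)`, then the explicit choices
`Q₁ = ((1−α)/α)(P₂ − P₁)⁺` and `Q₂ = ((1−α)/α)(P₁ − P₂)⁺` (Jordan positive parts) are
probability measures satisfying `(1−α) P₁ + α Q₁ = (1−α) P₂ + α Q₂`. -/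
theorem stmt9 {Ω : Type} [MeasurableSpace Ω] (P₁ P₂ : Measure Ω)
    [IsProbabilityMeasure P₁] [IsProbabilityMeasure P₂]
    (α : ℝ) (hα0 : 0 < α) (hα1 : α < 1)
    (htv : tvDist P₁ P₂ = α / (1 - α))
    (Q₁ Q₂ : Measure Ω)
    (hQ₁ : Q₁ = ENNReal.ofReal ((1 - α) / α) •
        (P₂.toSignedMeasure - P₁.toSignedMeasure).toJordanDecomposition.posPart)
    (hQ₂ : Q₂ = ENNReal.ofReal ((1 - α) / α) •
        (P₁.toSignedMeasure - P₂.toSignedMeasure).toJordanDecomposition.posPart) :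
    IsProbabilityMeasure Q₁ ∧ IsProbabilityMeasure Q₂ ∧
      ENNReal.ofReal (1 - α) • P₁ + ENNReal.ofReal α • Q₁
        = ENNReal.ofReal (1 - α) • P₂ + ENNReal.ofReal α • Q₂ := by
  set s := P₂.toSignedMeasure - P₁.toSignedMeasure with hs
  set pos := s.toJordanDecomposition.posPart with hpos
  set neg := s.toJordanDecomposition.negPart with hneg
  -- the other Jordan decomposition's posPart is `neg`
  have hswap : (P₁.toSignedMeasure - P₂.toSignedMeasure).toJordanDecomposition.posPart = neg := by
    rw [show P₁.toSignedMeasure - P₂.toSignedMeasure = -s by rw [hs, neg_sub],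
      SignedMeasure.toJordanDecomposition_neg, JordanDecomposition.neg_posPart]
  have hfp : pos Set.univ ≠ ⊤ := measure_ne_top _ _
  have hfn : neg Set.univ ≠ ⊤ := measure_ne_top _ _
  have key : ∀ A : Set Ω, MeasurableSet A →
      (pos A).toReal - (neg A).toReal = (P₂ A).toReal - (P₁ A).toReal := by
    intro A hA
    have h1 := s.toSignedMeasure_toJordanDecomposition
    have h2 : (pos A).toReal - (neg A).toReal = s A := by
      rw [← h1, JordanDecomposition.toSignedMeasure, VectorMeasure.sub_apply,
        Measure.toSignedMeasure_apply_measurable hA,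
        Measure.toSignedMeasure_apply_measurable hA]
      rfl
    rw [h2, hs, VectorMeasure.sub_apply, Measure.toSignedMeasure_apply_measurable hA,
      Measure.toSignedMeasure_apply_measurable hA]
    rfl
  -- pos univ = neg univ
  have huniv : (pos Set.univ).toReal = (neg Set.univ).toReal := by
    have := key Set.univ MeasurableSet.univ
    simp at this
    linarith
  -- upper bound for tvDist
  have hub : ∀ A : Set Ω, MeasurableSet A →
      |(P₁ A).toReal - (P₂ A).toReal| ≤ (pos Set.univ).toReal := by
    intro A hA
    have hk := key A hA
    have hpA : (pos A).toReal ≤ (pos Set.univ).toReal :=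
      ENNReal.toReal_mono hfp (measure_mono (Set.subset_univ _))
    have hnA : (neg A).toReal ≤ (neg Set.univ).toReal :=
      ENNReal.toReal_mono hfn (measure_mono (Set.subset_univ _))
    have hp0 : 0 ≤ (pos A).toReal := ENNReal.toReal_nonneg
    have hn0 : 0 ≤ (neg A).toReal := ENNReal.toReal_nonneg
    rw [abs_sub_le_iff]
    constructor <;> linarith
  -- achieving set
  obtain ⟨t, ht, ht1, ht2⟩ := s.toJordanDecomposition.mutuallySingular
  have hposA : pos tᶜ = pos Set.univ := by
    have := measure_add_measure_compl (μ := pos) ht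
    rw [ht1, zero_add] at this; exact this
  have hach : |(P₁ tᶜ).toReal - (P₂ tᶜ).toReal| = (pos Set.univ).toReal := by
    have hk := key tᶜ ht.compl
    rw [ht2, hposA] at hk
    simp at hk
    rw [abs_sub_comm, ← hk]
    exact abs_of_nonneg ENNReal.toReal_nonneg
  -- tvDist equals pos univ
  have htveq : tvDist P₁ P₂ = (pos Set.univ).toReal := by
    apply le_antisymm
    · exact ciSup_le fun A => hub A.1 A.2
    · rw [← hach]
      exact le_ciSup ⟨(pos Set.univ).toReal, fun x ⟨A, hAx⟩ => hAx ▸ hub A.1 A.2⟩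
        (⟨tᶜ, ht.compl⟩ : {A : Set Ω // MeasurableSet A})
  have hα1' : 0 < 1 - α := by linarith
  have hposval : pos Set.univ = ENNReal.ofReal (α / (1 - α)) := by
    rw [← htv, htveq, ENNReal.ofReal_toReal hfp]
  have hnegval : neg Set.univ = ENNReal.ofReal (α / (1 - α)) := by
    rw [← hposval, ← ENNReal.ofReal_toReal hfn, ← huniv, ENNReal.ofReal_toReal hfp]
  have hmul : ENNReal.ofReal ((1 - α) / α) * ENNReal.ofReal (α / (1 - α)) = 1 := by
    rw [← ENNReal.ofReal_mul (by positivity)]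
    rw [show (1 - α) / α * (α / (1 - α)) = 1 by field_simp]
    simp
  have hP₁ : IsProbabilityMeasure Q₁ := by
    constructor
    rw [hQ₁, Measure.smul_apply, smul_eq_mul, hposval]
    exact hmul
  have hP₂ : IsProbabilityMeasure Q₂ := by
    constructor
    rw [hQ₂, hswap, Measure.smul_apply, smul_eq_mul, hnegval]
    exact hmul
  refine ⟨hP₁, hP₂, ?_⟩
  rw [hQ₁, hQ₂, hswap, smul_smul, smul_smul,
    ← ENNReal.ofReal_mul hα0.le, show α * ((1 - α) / α) = 1 - α by field_simp]
  have hbase : P₁ + pos = P₂ + neg := by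
    ext A hA
    rw [Measure.add_apply, Measure.add_apply]
    have h1 : P₁ A ≠ ⊤ := measure_ne_top _ _
    have h2 : P₂ A ≠ ⊤ := measure_ne_top _ _
    have h3 : pos A ≠ ⊤ := measure_ne_top _ _
    have h4 : neg A ≠ ⊤ := measure_ne_top _ _
    rw [← ENNReal.ofReal_toReal (ENNReal.add_ne_top.2 ⟨h1, h3⟩),
      ← ENNReal.ofReal_toReal (ENNReal.add_ne_top.2 ⟨h2, h4⟩),
      ENNReal.toReal_add h1 h3, ENNReal.toReal_add h2 h4]
    have := key A hA
    congr 1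
    linarith
  calc ENNReal.ofReal (1 - α) • P₁ + ENNReal.ofReal (1 - α) • pos
      = ENNReal.ofReal (1 - α) • (P₁ + pos) := by rw [smul_add]
    _ = ENNReal.ofReal (1 - α) • (P₂ + neg) := by rw [hbase]
    _ = ENNReal.ofReal (1 - α) • P₂ + ENNReal.ofReal (1 - α) • neg := by rw [smul_add]
end

section
/- Let P and Q be probability measures on the same measurable space (Ω, F), and let A ∈ F be any event. Then P(A) + Q(Aᶜ) ≥ (1/2) exp(−KL(P, Q)), where Aᶜ is the complement of A. (When P is not absolutely continuous with respect to Q, KL(P,Q) = +∞ and the inequality holds trivially.) -/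
open MeasureTheory
open scoped Classical

/-- The Kullback–Leibler divergence `KL(P,Q) = ∫ log(dP/dQ) dP` when `P ≪ Q` (and the
log-likelihood ratio is `P`-integrable), and `+∞` otherwise. -/
noncomputable def klDiv {Ω : Type} [MeasurableSpace Ω] (P Q : Measure Ω) : EReal :=
  if P ≪ Q ∧ Integrable (fun x => Real.log (P.rnDeriv Q x).toReal) P
  then ((∫ x, Real.log (P.rnDeriv Q x).toReal ∂P : ℝ) : EReal)
  else ⊤

/-- `exp : EReal → ℝ≥0∞`, with `exp(−∞) = 0` and `exp(+∞) = ∞`. -/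
noncomputable def expEReal (x : EReal) : ENNReal :=
  if x = ⊤ then ⊤ else if x = ⊥ then 0 else ENNReal.ofReal (Real.exp x.toReal)

/-- **Bretagnolle–Huber inequality.** For probability measures `P, Q` and
any event `A`, `P(A) + Q(Aᶜ) ≥ (1/2) exp(−KL(P,Q))`; when `KL(P,Q) = +∞` the right-hand
side is `0` and the inequality holds trivially. -/
theorem stmt12 {Ω : Type} [MeasurableSpace Ω] (P Q : Measure Ω)
    [IsProbabilityMeasure P] [IsProbabilityMeasure Q]
    (A : Set Ω) (hA : MeasurableSet A) :
    P A + Q Aᶜ ≥ (1 / 2 : ENNReal) * expEReal (-(klDiv P Q)) := by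
  by_cases hKL : P ≪ Q ∧ Integrable (fun x => Real.log (P.rnDeriv Q x).toReal) P
  swap
  · simp [klDiv, if_neg hKL, expEReal]
  obtain ⟨hac, hint⟩ := hKL
  set f : Ω → ENNReal := P.rnDeriv Q with hf
  have hfm : Measurable f := Measure.measurable_rnDeriv P Q
  set D : ℝ := ∫ x, Real.log (f x).toReal ∂P with hD
  -- rewrite the RHS
  have hRHS : expEReal (-(klDiv P Q)) = ENNReal.ofReal (Real.exp (-D)) := by
    rw [klDiv, if_pos ⟨hac, hint⟩]
    rw [show (-((D : ℝ) : EReal)) = (((-D : ℝ)) : EReal) from (EReal.coe_neg D).symm]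
    rw [expEReal, if_neg (EReal.coe_ne_top _), if_neg (EReal.coe_ne_bot _),
      EReal.toReal_coe]
  rw [hRHS]
  -- key quantities
  set Imin : ENNReal := ∫⁻ x, min (f x) 1 ∂Q with hImin
  set Imax : ENNReal := ∫⁻ x, max (f x) 1 ∂Q with hImax
  set Isq : ENNReal := ∫⁻ x, f x ^ (1/2 : ℝ) ∂Q with hIsq
  -- Step 1: Imin ≤ P A + Q Aᶜ
  have h1 : Imin ≤ P A + Q Aᶜ := by
    have hsplit : Imin = (∫⁻ x in A, min (f x) 1 ∂Q) + ∫⁻ x in Aᶜ, min (f x) 1 ∂Q :=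
      (lintegral_add_compl _ hA).symm
    have hle1 : (∫⁻ x in A, min (f x) 1 ∂Q) ≤ P A := by
      calc (∫⁻ x in A, min (f x) 1 ∂Q) ≤ ∫⁻ x in A, f x ∂Q :=
            lintegral_mono fun x => min_le_left _ _
        _ = P A := Measure.setLIntegral_rnDeriv hac A
    have hle2 : (∫⁻ x in Aᶜ, min (f x) 1 ∂Q) ≤ Q Aᶜ := by
      calc (∫⁻ x in Aᶜ, min (f x) 1 ∂Q) ≤ ∫⁻ _ in Aᶜ, 1 ∂Q :=
            lintegral_mono fun x => min_le_right _ _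
        _ = Q Aᶜ := by simp
    rw [hsplit]; exact add_le_add hle1 hle2
  -- Step 2: Cauchy-Schwarz : Isq ≤ Imin^(1/2) * Imax^(1/2)
  have h2 : Isq ≤ Imin ^ (1/2 : ℝ) * Imax ^ (1/2 : ℝ) := by
    have hconj : (2 : ℝ).HolderConjugate 2 := by
      constructor <;> norm_num
    have hmin : AEMeasurable (fun x => min (f x) 1 ^ (1/2 : ℝ)) Q :=
      ((hfm.min measurable_const).pow_const _).aemeasurable
    have hmax : AEMeasurable (fun x => max (f x) 1 ^ (1/2 : ℝ)) Q :=
      ((hfm.max measurable_const).pow_const _).aemeasurable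
    have := ENNReal.lintegral_mul_le_Lp_mul_Lq Q hconj hmin hmax
    have hprod : ∀ x, (fun x => min (f x) 1 ^ (1/2 : ℝ)) x *
        (fun x => max (f x) 1 ^ (1/2 : ℝ)) x = f x ^ (1/2 : ℝ) := by
      intro x
      rw [← ENNReal.mul_rpow_of_nonneg _ _ (by norm_num : (0:ℝ) ≤ 1/2),
        min_mul_max, mul_one]
    have hsq : ∀ g : Ω → ENNReal, (∫⁻ x, (g x ^ (1/2 : ℝ)) ^ (2 : ℝ) ∂Q) = ∫⁻ x, g x ∂Q := by
      intro g
      congr 1; funext x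
      rw [← ENNReal.rpow_mul]; norm_num
    calc Isq = ∫⁻ x, (fun x => min (f x) 1 ^ (1/2 : ℝ)) x *
          (fun x => max (f x) 1 ^ (1/2 : ℝ)) x ∂Q := by
          rw [hIsq]; congr 1; funext x; rw [hprod]
      _ ≤ (∫⁻ x, ((min (f x) 1 ^ (1/2 : ℝ)) : ENNReal) ^ (2:ℝ) ∂Q) ^ (1/2 : ℝ) *
          (∫⁻ x, ((max (f x) 1 ^ (1/2 : ℝ)) : ENNReal) ^ (2:ℝ) ∂Q) ^ (1/2 : ℝ) := this
      _ = Imin ^ (1/2 : ℝ) * Imax ^ (1/2 : ℝ) := by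
          rw [hsq (fun x => min (f x) 1), hsq (fun x => max (f x) 1)]
  -- Step 3: Imax ≤ 2
  have h3 : Imax ≤ 2 := by
    calc Imax ≤ ∫⁻ x, f x + 1 ∂Q := lintegral_mono fun x => max_le_iff.2
          ⟨le_add_of_nonneg_right zero_le, le_add_of_nonneg_left zero_le⟩
      _ = (∫⁻ x, f x ∂Q) + 1 := by rw [lintegral_add_left hfm]; simp
      _ = 2 := by rw [Measure.lintegral_rnDeriv hac]; simp; norm_num
  -- Step 4: Jensen : ofReal (exp (-D/2)) ≤ Isq
  have h4 : ENNReal.ofReal (Real.exp (-D/2)) ≤ Isq := by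
    set m : ℝ := -D/2 with hm
    set X : Ω → ℝ := fun x => -(1/2 : ℝ) * Real.log (f x).toReal with hX
    have hXint : Integrable X P := hint.const_mul _
    have hXm : Measurable X :=
      (Real.measurable_log.comp hfm.ennreal_toReal).const_mul _
    have hXval : ∫ x, X x ∂P = m := by
      rw [hX]
      rw [integral_const_mul]
      rw [← hD, hm]; ring
    set φ : Ω → ℝ := fun x => Real.exp m * (1 + (X x - m)) with hφ
    have hφint : Integrable φ P :=
      (((integrable_const (1:ℝ)).add (hXint.sub (integrable_const m))).const_mul _)
    have hφval : ∫ x, φ x ∂P = Real.exp m := by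
      have h' : ∫ x, (1 + (X x - m)) ∂P = 1 := by
        have he : (fun x => 1 + (X x - m)) = fun x => X x + (1 - m) := by funext x; ring
        rw [he, integral_add hXint (integrable_const _), hXval, integral_const]
        simp only [measure_univ, ENNReal.toReal_one, probReal_univ, one_smul]
        ring
      rw [hφ, integral_const_mul, h', mul_one]
    have hpt : ∀ x, φ x ≤ Real.exp (X x) := by
      intro x
      have h1 := Real.add_one_le_exp (X x - m)
      have h2 : Real.exp m * (1 + (X x - m)) ≤ Real.exp m * Real.exp (X x - m) := by
        nlinarith [Real.exp_pos m]
      calc φ x = Real.exp m * (1 + (X x - m)) := rfl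
        _ ≤ Real.exp m * Real.exp (X x - m) := h2
        _ = Real.exp (X x) := by rw [← Real.exp_add]; ring_nf
    have hofmax : ∀ a : ℝ, ENNReal.ofReal (max a 0) = ENNReal.ofReal a := by
      intro a
      rcases le_total a 0 with h | h
      · rw [max_eq_right h, ENNReal.ofReal_zero, eq_comm, ENNReal.ofReal_eq_zero]
        exact h
      · rw [max_eq_left h]
    have step1 : ENNReal.ofReal (Real.exp m) ≤ ∫⁻ x, ENNReal.ofReal (Real.exp (X x)) ∂P := by
      calc ENNReal.ofReal (Real.exp m) = ENNReal.ofReal (∫ x, φ x ∂P) := by rw [hφval]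
        _ ≤ ENNReal.ofReal (∫ x, max (φ x) 0 ∂P) := ENNReal.ofReal_le_ofReal
            (integral_mono hφint hφint.pos_part fun x => le_max_left _ _)
        _ = ∫⁻ x, ENNReal.ofReal (max (φ x) 0) ∂P :=
            ofReal_integral_eq_lintegral_ofReal hφint.pos_part
              (Filter.Eventually.of_forall fun x => le_max_right _ _)
        _ = ∫⁻ x, ENNReal.ofReal (φ x) ∂P := lintegral_congr fun x => hofmax _
        _ ≤ ∫⁻ x, ENNReal.ofReal (Real.exp (X x)) ∂P :=
            lintegral_mono fun x => ENNReal.ofReal_le_ofReal (hpt x)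
    have step2 : (∫⁻ x, ENNReal.ofReal (Real.exp (X x)) ∂P)
        = ∫⁻ x, f x * ENNReal.ofReal (Real.exp (X x)) ∂Q := by
      have hg : Measurable fun x => ENNReal.ofReal (Real.exp (X x)) :=
        (Real.measurable_exp.comp hXm).ennreal_ofReal
      conv_lhs => rw [← Measure.withDensity_rnDeriv_eq P Q hac]
      rw [lintegral_withDensity_eq_lintegral_mul Q hfm hg]
      rfl
    have step3 : (∫⁻ x, f x * ENNReal.ofReal (Real.exp (X x)) ∂Q) = Isq := by
      rw [hIsq]
      apply lintegral_congr_ae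
      filter_upwards [Measure.rnDeriv_ne_top P Q] with x hx
      rcases eq_or_ne (f x) 0 with h0 | h0
      · rw [h0, zero_mul, ENNReal.zero_rpow_of_pos (by norm_num)]
      · have ht : 0 < (f x).toReal := ENNReal.toReal_pos h0 hx
        set t : ℝ := (f x).toReal with htd
        have hXx : Real.exp (X x) = t ^ (-(1/2) : ℝ) := by
          rw [Real.rpow_def_of_pos ht]
          congr 1; ring
        have hfx : f x = ENNReal.ofReal t := (ENNReal.ofReal_toReal hx).symm
        rw [hXx, hfx, ← ENNReal.ofReal_mul ht.le,
          ENNReal.ofReal_rpow_of_pos ht]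
        congr 1
        rw [show t * t ^ (-(1/2) : ℝ) = t ^ (1:ℝ) * t ^ (-(1/2) : ℝ) by rw [Real.rpow_one],
          ← Real.rpow_add ht]
        norm_num
    rw [hm] at step1 ⊢
    calc ENNReal.ofReal (Real.exp (-D/2)) ≤ ∫⁻ x, ENNReal.ofReal (Real.exp (X x)) ∂P := step1
      _ = ∫⁻ x, f x * ENNReal.ofReal (Real.exp (X x)) ∂Q := step2
      _ = Isq := step3
  -- combine
  have key : ENNReal.ofReal (Real.exp (-D)) ≤ Imin * 2 := by
    have e1 : ENNReal.ofReal (Real.exp (-D)) = ENNReal.ofReal (Real.exp (-D/2)) ^ (2:ℝ) := by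
      rw [ENNReal.ofReal_rpow_of_pos (Real.exp_pos _), ← Real.exp_mul]
      ring_nf
    calc ENNReal.ofReal (Real.exp (-D)) = ENNReal.ofReal (Real.exp (-D/2)) ^ (2:ℝ) := e1
      _ ≤ Isq ^ (2:ℝ) := ENNReal.rpow_le_rpow h4 (by norm_num)
      _ ≤ (Imin ^ (1/2:ℝ) * Imax ^ (1/2:ℝ)) ^ (2:ℝ) := ENNReal.rpow_le_rpow h2 (by norm_num)
      _ = Imin * Imax := by
          rw [ENNReal.mul_rpow_of_nonneg _ _ (by norm_num : (0:ℝ) ≤ 2),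
            ← ENNReal.rpow_mul, ← ENNReal.rpow_mul]
          norm_num
      _ ≤ Imin * 2 := mul_le_mul_right h3 _
  -- finish
  have : (1/2 : ENNReal) * ENNReal.ofReal (Real.exp (-D)) ≤ Imin := by
    calc (1/2 : ENNReal) * ENNReal.ofReal (Real.exp (-D)) ≤ (1/2 : ENNReal) * (Imin * 2) :=
        mul_le_mul_right key _
      _ = Imin := by
        rw [mul_comm Imin 2, ← mul_assoc,
          show (1/2 : ENNReal) * 2 = 1 by
            rw [one_div, ENNReal.inv_mul_cancel two_ne_zero ENNReal.ofNat_ne_top],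
          one_mul]
  exact this.trans h1
end

section
/- Let (X_t)_{t=1}^{T} be vectors in ℝ^d with ‖X_t‖ ≤ L for all t, let V be a symmetric positive-definite d × d real matrix, and define V̄_t = V + Σ_{τ=1}^{t} X_τ X_τ'. Then Σ_{t=1}^{T} min{1, X_t' V̄_{t−1}^{-1} X_t} ≤ 2 log( det(V̄_T) / det(V) ) ≤ 2 ( d · log( (trace(V) + T L²)/d ) − log det V ). -/
open Matrix

set_option maxHeartbeats 1000000

private lemma minLog13 {a : ℝ} (ha : 0 ≤ a) : min 1 a ≤ 2 * Real.log (1 + a) := by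
  rcases le_total a 1 with h | h
  · rw [min_eq_right h]
    have h1 : (0:ℝ) < 1 + a := by linarith
    have h3 := Real.log_le_sub_one_of_pos (x := (1+a)⁻¹) (by positivity)
    rw [Real.log_inv] at h3
    have h4 : (1+a)⁻¹ = 1 - a/(1+a) := by field_simp; ring
    rw [h4] at h3
    have h5 : a / (1+a) ≤ Real.log (1+a) := by linarith
    have h6 : a ≤ 2 * (a/(1+a)) := by
      rw [show 2*(a/(1+a)) = 2*a/(1+a) from (mul_div_assoc 2 a (1+a)).symm, le_div_iff₀ h1]
      nlinarith
    linarith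
  · rw [min_eq_left h]
    have h2 : Real.log 2 ≤ Real.log (1+a) := Real.log_le_log (by norm_num) (by linarith)
    nlinarith [Real.log_two_gt_d9]

private lemma vmvPSD13 {d : ℕ} (x : Fin d → ℝ) : (vecMulVec x x).PosSemidef := by
  rw [vecMulVec_eq Unit]
  simpa using posSemidef_conjTranspose_mul_self (replicateRow Unit x)

private lemma detLemma13 {d : ℕ} {A : Matrix (Fin d) (Fin d) ℝ} (hA : A.PosDef) (x : Fin d → ℝ) :
    (A + vecMulVec x x).det = A.det * (1 + x ⬝ᵥ (A⁻¹ *ᵥ x)) := by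
  rw [vecMulVec_eq Unit, det_add_replicateCol_mul_replicateRow hA.det_pos.ne'.isUnit]
  congr 1
  rw [det_unique]
  simp [Matrix.mul_apply, dotProduct, mulVec, Finset.mul_sum, Finset.sum_mul]
  rw [Finset.sum_comm]
  exact Finset.sum_congr rfl fun i _ => Finset.sum_congr rfl fun j _ => by ring

private lemma traceEig13 {d : ℕ} {A : Matrix (Fin d) (Fin d) ℝ} (hA : A.IsHermitian) :
    A.trace = ∑ i, hA.eigenvalues i := by
  nth_rewrite 1 [hA.spectral_theorem]
  rw [Unitary.conjStarAlgAut_apply, Matrix.trace_mul_cycle,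
    show (star (hA.eigenvectorUnitary : Matrix (Fin d) (Fin d) ℝ))
        * (hA.eigenvectorUnitary : Matrix (Fin d) (Fin d) ℝ) = 1 from
      (Matrix.mem_unitaryGroup_iff').mp hA.eigenvectorUnitary.2,
    one_mul, Matrix.trace_diagonal]
  simp


/-- **Elliptical potential lemma.** With `V̄_t = V + Σ_{τ≤t} X_τ X_τ'`
(0-based: `Vbar n = V + Σ_{τ < n} X_τ X_τ'`), if `‖X_t‖ ≤ L` for all `t`, then
`Σ_t min{1, X_t' V̄_{t−1}⁻¹ X_t} ≤ 2 log(det V̄_T / det V)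
  ≤ 2 (d log((trace V + T L²)/d) − log det V)`. -/
theorem stmt13 (d T : ℕ) (L : ℝ) (X : Fin T → Fin d → ℝ)
    (hX : ∀ t, Real.sqrt (X t ⬝ᵥ X t) ≤ L)
    (V : Matrix (Fin d) (Fin d) ℝ) (hV : V.PosDef)
    (Vbar : ℕ → Matrix (Fin d) (Fin d) ℝ)
    (hVbar : ∀ n, Vbar n
        = V + ∑ τ ∈ Finset.filter (fun τ : Fin T => (τ : ℕ) < n) Finset.univ,
            vecMulVec (X τ) (X τ)) :
    (∑ t : Fin T, min 1 (X t ⬝ᵥ ((Vbar t)⁻¹ *ᵥ X t)))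
        ≤ 2 * Real.log ((Vbar T).det / V.det) ∧
    2 * Real.log ((Vbar T).det / V.det)
        ≤ 2 * ((d : ℝ) * Real.log ((V.trace + T * L ^ 2) / d) - Real.log V.det) := by
  have hVbar0 : Vbar 0 = V := by rw [hVbar]; simp
  have hPD : ∀ n, (Vbar n).PosDef := fun n => by
    rw [hVbar]
    refine hV.add_posSemidef ?_
    exact Finset.sum_induction _ _ (fun a b ha hb => ha.add hb)
      Matrix.PosSemidef.zero (fun τ _ => vmvPSD13 (X τ))
  have hdetpos : ∀ n, 0 < (Vbar n).det := fun n => (hPD n).det_pos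
  set a : Fin T → ℝ := fun t => X t ⬝ᵥ ((Vbar t)⁻¹ *ᵥ X t) with ha
  have hanneg : ∀ t, 0 ≤ a t := fun t => by
    simpa using ((hPD t).inv).posSemidef.dotProduct_mulVec_nonneg (X t)
  have hstep : ∀ t : Fin T, Vbar (↑t + 1) = Vbar ↑t + vecMulVec (X t) (X t) := by
    intro t
    rw [hVbar, hVbar]
    have hins : Finset.filter (fun τ : Fin T => (τ:ℕ) < ↑t + 1) Finset.univ
        = insert t (Finset.filter (fun τ : Fin T => (τ:ℕ) < ↑t) Finset.univ) := by
      ext τ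
      simp [Fin.ext_iff]
      omega
    rw [hins, Finset.sum_insert (by simp)]
    abel
  have hdetstep : ∀ t : Fin T, Real.log (Vbar (↑t+1)).det
      = Real.log (Vbar ↑t).det + Real.log (1 + a t) := by
    intro t
    rw [hstep t, detLemma13 (hPD ↑t),
      Real.log_mul (hdetpos ↑t).ne' (by have := hanneg t; positivity)]
  have htel : ∑ t : Fin T, Real.log (1 + a t)
      = Real.log (Vbar T).det - Real.log V.det := by
    have e1 : ∑ t : Fin T, Real.log (1 + a t)
        = ∑ t : Fin T, (Real.log (Vbar (↑t+1)).det - Real.log (Vbar ↑t).det) :=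
      Finset.sum_congr rfl fun t _ => by rw [hdetstep t]; ring
    have e2 := Fin.sum_univ_eq_sum_range
        (fun i => Real.log (Vbar (i+1)).det - Real.log (Vbar i).det) T
    have e3 := Finset.sum_range_sub (fun n => Real.log (Vbar n).det) T
    rw [e1, e2, e3, hVbar0]
  have hlogdiv : Real.log ((Vbar T).det / V.det)
      = Real.log (Vbar T).det - Real.log V.det :=
    Real.log_div (hdetpos T).ne' hV.det_pos.ne'
  constructor
  · rw [hlogdiv, ← htel, Finset.mul_sum]
    exact Finset.sum_le_sum fun t _ => minLog13 (hanneg t)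
  · rcases Nat.eq_zero_or_pos d with hd | hd
    · subst hd
      simp [Matrix.det_isEmpty]
    · have : Nonempty (Fin d) := Fin.pos_iff_nonempty.mp hd
      have hdR : (0:ℝ) < d := by exact_mod_cast hd
      have hPDT := hPD T
      have hH := hPDT.isHermitian
      have hμpos : ∀ i, 0 < hH.eigenvalues i := fun i => hPDT.eigenvalues_pos i
      have hdet : (Vbar T).det = ∏ i, hH.eigenvalues i := hH.det_eq_prod_eigenvalues
      have htr : (Vbar T).trace = ∑ i, hH.eigenvalues i := traceEig13 hH
      have hs : 0 < (Vbar T).trace := by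
        rw [htr]
        exact Finset.sum_pos (fun i _ => hμpos i) Finset.univ_nonempty
      set c : ℝ := (Vbar T).trace / d with hc_def
      have hc : 0 < c := div_pos hs hdR
      have hlogdet : Real.log (Vbar T).det ≤ d * Real.log c := by
        rw [hdet, Real.log_prod (fun i _ => (hμpos i).ne')]
        have hbound : ∀ i, Real.log (hH.eigenvalues i)
            ≤ Real.log c + (hH.eigenvalues i / c - 1) := fun i => by
          have h := Real.log_le_sub_one_of_pos (x := hH.eigenvalues i / c) (div_pos (hμpos i) hc)
          rw [Real.log_div (hμpos i).ne' hc.ne'] at h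
          linarith
        have hsum : (∑ i, hH.eigenvalues i) / c = d := by
          rw [← htr, hc_def]
          field_simp
        calc ∑ i, Real.log (hH.eigenvalues i)
            ≤ ∑ i : Fin d, (Real.log c + (hH.eigenvalues i / c - 1)) :=
              Finset.sum_le_sum fun i _ => hbound i
          _ = d * Real.log c + ((∑ i, hH.eigenvalues i) / c - d) := by
              rw [Finset.sum_add_distrib, Finset.sum_sub_distrib, ← Finset.sum_div]
              simp [Finset.card_univ, mul_comm]
          _ = d * Real.log c := by rw [hsum]; ring
      have htrbound : (Vbar T).trace ≤ V.trace + T * L ^ 2 := by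
        rw [hVbar T, Matrix.trace_add, Matrix.trace_sum]
        have hfilter : Finset.filter (fun τ : Fin T => (τ:ℕ) < T) Finset.univ
            = Finset.univ := by
          ext τ; simp [τ.is_lt]
        rw [hfilter]
        have htrv : ∀ t : Fin T, (vecMulVec (X t) (X t)).trace ≤ L ^ 2 := fun t => by
          have h1 : (vecMulVec (X t) (X t)).trace = X t ⬝ᵥ X t := by
            simp [Matrix.trace, Matrix.diag, vecMulVec_apply, dotProduct]
          have h2 : (0:ℝ) ≤ X t ⬝ᵥ X t :=
            Finset.sum_nonneg fun i _ => mul_self_nonneg _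
          have h3 := hX t
          rw [h1, ← Real.sq_sqrt h2]
          exact pow_le_pow_left₀ (Real.sqrt_nonneg _) h3 2
        calc V.trace + ∑ t : Fin T, (vecMulVec (X t) (X t)).trace
            ≤ V.trace + ∑ _t : Fin T, L ^ 2 := by
              gcongr with t
              exact htrv t
          _ = V.trace + T * L ^ 2 := by simp [Finset.card_univ, mul_comm]
      have hmono : Real.log c ≤ Real.log ((V.trace + T * L ^ 2) / d) :=
        Real.log_le_log hc (by rw [hc_def]; gcongr)
      rw [hlogdiv]
      have hfin : Real.log (Vbar T).det ≤ d * Real.log ((V.trace + T * L ^ 2) / d) :=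
        hlogdet.trans (mul_le_mul_of_nonneg_left hmono (by positivity))
      linarith
end

section
/- Let d, M, n be positive integers and let x₁, …, x_n ∈ ℝ^d satisfy ‖x_t‖ ≤ 1 for all t. For each t ∈ {1,…,n} set A_t = (1/M) I_d + Σ_{τ=1}^{t−1} x_τ x_τ'. If c > 0 satisfies c < min{ 1, √(x_t' A_t^{-1} x_t) } for every t ∈ {1,…,n}, then c · n ≤ √( 2 d n log(2 M n) ). -/
open Matrix

lemma aux_vecMulVec_psd {d : ℕ} (v : Fin d → ℝ) : (vecMulVec v v).PosSemidef := by
  rw [posSemidef_iff_dotProduct_mulVec]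
  constructor
  · ext i j
    simp [conjTranspose_apply, vecMulVec_apply, mul_comm]
  · intro y
    have h1 : vecMulVec v v *ᵥ y = (v ⬝ᵥ y) • v := by
      ext i
      simp only [mulVec, dotProduct, vecMulVec_apply, Pi.smul_apply, smul_eq_mul,
        Finset.sum_mul]
      exact Finset.sum_congr rfl fun j _ => by ring
    rw [h1, star_trivial, dotProduct_smul, smul_eq_mul, dotProduct_comm]
    exact mul_self_nonneg _

lemma aux_min_le_two_log {w : ℝ} (hw : 0 ≤ w) : min 1 w ≤ 2 * Real.log (1 + w) := by
  have hpos : (0:ℝ) < 1 + w := by linarith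
  have h := Real.one_sub_inv_le_log_of_pos hpos
  rcases le_total w 1 with h1 | h1
  · rw [min_eq_right h1]
    have h2 : (1 + w)⁻¹ ≤ 1 - w / 2 := by
      rw [inv_le_iff_one_le_mul₀ hpos]
      nlinarith
    linarith
  · rw [min_eq_left h1]
    have h2 := Real.one_sub_inv_le_log_of_pos (show (0:ℝ) < 2 by norm_num)
    have h3 : Real.log 2 ≤ Real.log (1 + w) := Real.log_le_log (by norm_num) (by linarith)
    norm_num at h2
    linarith


/-- With `A_t = (1/M) I_d + Σ_{τ<t} x_τ x_τ'` (0-based indexing of the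
`n` vectors, each of Euclidean norm at most 1), if `c > 0` satisfies
`c < min{1, √(x_t' A_t⁻¹ x_t)}` for all `t`, then `c n ≤ √(2 d n log(2 M n))`. -/
theorem stmt17 (d M n : ℕ) (hd : 0 < d) (hM : 0 < M) (hn : 0 < n)
    (x : Fin n → Fin d → ℝ) (hx : ∀ t, Real.sqrt (x t ⬝ᵥ x t) ≤ 1)
    (A : ℕ → Matrix (Fin d) (Fin d) ℝ)
    (hA : ∀ t : ℕ, A t = (1 / (M : ℝ)) • (1 : Matrix (Fin d) (Fin d) ℝ)
            + ∑ τ ∈ Finset.filter (fun τ : Fin n => (τ : ℕ) < t) Finset.univ,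
                vecMulVec (x τ) (x τ))
    (c : ℝ) (hc : 0 < c)
    (hclt : ∀ t : Fin n, c < min 1 (Real.sqrt (x t ⬝ᵥ ((A t)⁻¹ *ᵥ x t)))) :
    c * n ≤ Real.sqrt (2 * d * n * Real.log (2 * M * n)) := by
  have hM1 : (1:ℝ) ≤ (M:ℝ) := by exact_mod_cast hM
  have hn1 : (1:ℝ) ≤ (n:ℝ) := by exact_mod_cast hn
  have hMpos : (0:ℝ) < (M:ℝ) := by linarith
  set w : Fin n → ℝ := fun t => x t ⬝ᵥ ((A t)⁻¹ *ᵥ x t) with hw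
  -- every A t is positive definite
  have hApd : ∀ t : ℕ, (A t).PosDef := by
    intro t
    rw [hA t]
    refine Matrix.PosDef.add_posSemidef ?_ ?_
    · rw [smul_one_eq_diagonal]
      exact Matrix.posDef_diagonal_iff.2 fun _ => by positivity
    · refine Finset.sum_induction _ _ (fun a b ha hb => ha.add hb)
        Matrix.PosSemidef.zero fun i _ => aux_vecMulVec_psd (x i)
  have hw0 : ∀ t : Fin n, 0 ≤ w t := by
    intro t
    have := ((hApd t).inv.posSemidef).dotProduct_mulVec_nonneg (x t)
    rwa [star_trivial] at this
  -- norm bound on each x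
  have hxx : ∀ t : Fin n, x t ⬝ᵥ x t ≤ 1 := by
    intro t
    have h0 : 0 ≤ x t ⬝ᵥ x t := Finset.sum_nonneg fun i _ => mul_self_nonneg _
    calc x t ⬝ᵥ x t = Real.sqrt (x t ⬝ᵥ x t) ^ 2 := (Real.sq_sqrt h0).symm
      _ ≤ 1 ^ 2 := by
          have := hx t
          nlinarith [Real.sqrt_nonneg (x t ⬝ᵥ x t)]
      _ = 1 := one_pow 2
  -- one-step recursion
  have hstep : ∀ t : Fin n, A ((t : ℕ) + 1) = A t + vecMulVec (x t) (x t) := by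
    intro t
    rw [hA, hA]
    have hins : Finset.filter (fun τ : Fin n => (τ : ℕ) < (t : ℕ) + 1) Finset.univ
        = insert t (Finset.filter (fun τ : Fin n => (τ : ℕ) < (t : ℕ)) Finset.univ) := by
      ext τ
      simp [Fin.ext_iff]
      omega
    rw [hins, Finset.sum_insert (by simp)]
    abel
  -- determinant recursion
  have hdetstep : ∀ t : Fin n, (A ((t : ℕ) + 1)).det = (A t).det * (1 + w t) := by
    intro t
    have hu : IsUnit (A t).det := (hApd t).det_pos.ne'.isUnit
    rw [hstep t, vecMulVec_eq (Fin 1), Matrix.det_add_mul _ _ hu]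
    congr 1
    erw [det_fin_one, Matrix.add_apply, Matrix.one_apply_eq]
    have h2 : (Matrix.replicateRow (Fin 1) (x t) * (A ((t:ℕ)))⁻¹ * Matrix.replicateCol (Fin 1) (x t)) 0 0
        = x t ⬝ᵥ ((A t)⁻¹ *ᵥ x t) := by
      simp only [Matrix.mul_apply, Matrix.replicateRow_apply, Matrix.replicateCol_apply, dotProduct, mulVec,
        Finset.sum_mul]
      rw [Finset.sum_comm]
      exact Finset.sum_congr rfl fun i _ => by
        rw [Finset.mul_sum]
        exact Finset.sum_congr rfl fun j _ => by ring
    rw [h2]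
  -- telescoping
  have hkey : ∀ t : ℕ, t ≤ n → (A t).det
      = (A 0).det * ∏ τ ∈ Finset.filter (fun τ : Fin n => (τ : ℕ) < t) Finset.univ, (1 + w τ) := by
    intro t
    induction t with
    | zero =>
      intro _
      rw [Finset.filter_false_of_mem (fun τ _ => by omega), Finset.prod_empty, mul_one]
    | succ t ih =>
      intro ht
      have htn : t < n := ht
      have hins : Finset.filter (fun τ : Fin n => (τ : ℕ) < t + 1) Finset.univ
          = insert (⟨t, htn⟩ : Fin n) (Finset.filter (fun τ : Fin n => (τ : ℕ) < t) Finset.univ) := by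
        ext τ
        simp [Fin.ext_iff]
        omega
      rw [show (t + 1 : ℕ) = ((⟨t, htn⟩ : Fin n) : ℕ) + 1 from rfl, hdetstep ⟨t, htn⟩,
        ih (le_of_lt htn), hins, Finset.prod_insert (by simp)]
      ring
  have hdetn : (A n).det = (A 0).det * ∏ τ : Fin n, (1 + w τ) := by
    have := hkey n le_rfl
    rwa [Finset.filter_true_of_mem (fun τ _ => τ.isLt)] at this
  have hA0 : (A 0).det = ((1 : ℝ) / M) ^ d := by
    rw [hA 0, Finset.filter_false_of_mem (fun τ _ => by omega), Finset.sum_empty, add_zero,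
      Matrix.det_smul, Matrix.det_one, mul_one, Fintype.card_fin]
  -- eigenvalue upper bound on det (A n)
  have hH : (A n).IsHermitian := (hApd n).isHermitian
  have heig : ∀ i : Fin d, hH.eigenvalues i ≤ 1 / M + n := by
    intro i
    have hv1 : ‖hH.eigenvectorBasis i‖ = 1 := hH.eigenvectorBasis.orthonormal.1 i
    set v : Fin d → ℝ := ⇑(hH.eigenvectorBasis i) with hvdef
    have hvv : v ⬝ᵥ v = 1 := by
      have h1 : ‖hH.eigenvectorBasis i‖ ^ 2 = 1 := by rw [hv1]; norm_num
      rw [EuclideanSpace.norm_eq] at h1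
      rw [Real.sq_sqrt (Finset.sum_nonneg fun j _ => sq_nonneg _)] at h1
      simpa [dotProduct, Real.norm_eq_abs, sq_abs, sq] using h1
    have heq := hH.eigenvalues_eq i
    rw [heq]
    have hbound : star v ⬝ᵥ (A n *ᵥ v) ≤ 1 / M + n := by
      rw [star_trivial, hA n, Matrix.add_mulVec, dotProduct_add, smul_mulVec,
        Matrix.one_mulVec, dotProduct_smul, smul_eq_mul, hvv, mul_one]
      gcongr
      have hsum : v ⬝ᵥ ((∑ τ ∈ Finset.filter (fun τ : Fin n => (τ : ℕ) < n) Finset.univ,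
          vecMulVec (x τ) (x τ)) *ᵥ v)
          = ∑ τ ∈ Finset.filter (fun τ : Fin n => (τ : ℕ) < n) Finset.univ, (x τ ⬝ᵥ v) ^ 2 := by
        have hsum2 : (∑ τ ∈ Finset.filter (fun τ : Fin n => (τ : ℕ) < n) Finset.univ,
            vecMulVec (x τ) (x τ)) *ᵥ v
            = ∑ τ ∈ Finset.filter (fun τ : Fin n => (τ : ℕ) < n) Finset.univ,
              (vecMulVec (x τ) (x τ)) *ᵥ v := by
          ext j
          simp only [mulVec, dotProduct, Finset.sum_apply, Matrix.sum_apply, Finset.sum_mul]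
          rw [Finset.sum_comm]
        rw [hsum2]
        have hds : v ⬝ᵥ (∑ τ ∈ Finset.filter (fun τ : Fin n => (τ : ℕ) < n) Finset.univ,
            (vecMulVec (x τ) (x τ)) *ᵥ v)
            = ∑ τ ∈ Finset.filter (fun τ : Fin n => (τ : ℕ) < n) Finset.univ,
              v ⬝ᵥ ((vecMulVec (x τ) (x τ)) *ᵥ v) := by
          simp only [dotProduct, Finset.sum_apply, Finset.mul_sum]
          exact Finset.sum_comm
        rw [hds]
        refine Finset.sum_congr rfl fun τ _ => ?_
        have h1 : vecMulVec (x τ) (x τ) *ᵥ v = (x τ ⬝ᵥ v) • (x τ) := by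
          ext j
          simp only [mulVec, dotProduct, vecMulVec_apply, Pi.smul_apply, smul_eq_mul,
            Finset.sum_mul]
          exact Finset.sum_congr rfl fun k _ => by ring
        rw [h1, dotProduct_smul, smul_eq_mul, dotProduct_comm, sq]
      rw [hsum]
      calc ∑ τ ∈ Finset.filter (fun τ : Fin n => (τ : ℕ) < n) Finset.univ, (x τ ⬝ᵥ v) ^ 2
          ≤ ∑ τ ∈ Finset.filter (fun τ : Fin n => (τ : ℕ) < n) Finset.univ, 1 := by
            refine Finset.sum_le_sum fun τ _ => ?_
            have hcs := Finset.sum_mul_sq_le_sq_mul_sq Finset.univ (x τ) v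
            have : (x τ ⬝ᵥ v) ^ 2 ≤ (x τ ⬝ᵥ x τ) * (v ⬝ᵥ v) := by
              simpa [dotProduct, sq] using hcs
            rw [hvv, mul_one] at this
            exact this.trans (hxx τ)
        _ ≤ n := by
            rw [Finset.sum_const, nsmul_eq_mul, mul_one]
            have := Finset.card_filter_le (Finset.univ : Finset (Fin n))
              (fun τ : Fin n => (τ : ℕ) < n)
            calc ((Finset.filter (fun τ : Fin n => (τ : ℕ) < n) Finset.univ).card : ℝ)
                ≤ (Finset.univ : Finset (Fin n)).card := by exact_mod_cast this
              _ = n := by simp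
    have hre : RCLike.re (star v ⬝ᵥ (A n *ᵥ v)) = star v ⬝ᵥ (A n *ᵥ v) := rfl
    rw [hre]
    exact hbound
  have hdetle : (A n).det ≤ (1 / M + (n : ℝ)) ^ d := by
    have h1 := hH.det_eq_prod_eigenvalues
    have h2 : (A n).det = ∏ i : Fin d, hH.eigenvalues i := by exact_mod_cast h1
    rw [h2]
    calc ∏ i : Fin d, hH.eigenvalues i ≤ ∏ i : Fin d, (1 / M + (n : ℝ)) :=
          Finset.prod_le_prod (fun i _ => (hApd n).posSemidef.eigenvalues_nonneg i)
            (fun i _ => heig i)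
      _ = (1 / M + (n : ℝ)) ^ d := by rw [Finset.prod_const, Finset.card_univ, Fintype.card_fin]
  -- product bound
  have hMn1 : (1:ℝ) ≤ (M : ℝ) * n := by nlinarith
  have hprod : ∏ τ : Fin n, (1 + w τ) ≤ (2 * M * n) ^ d := by
    have h2 : ∏ τ : Fin n, (1 + w τ) ≤ (1 + M * n) ^ d := by
      have hd0 : (0:ℝ) < ((1:ℝ) / M) ^ d := by positivity
      refine le_of_mul_le_mul_left ?_ hd0
      calc ((1:ℝ)/M) ^ d * ∏ τ : Fin n, (1 + w τ)
          = (A 0).det * ∏ τ : Fin n, (1 + w τ) := by rw [hA0]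
        _ = (A n).det := hdetn.symm
        _ ≤ (1 / M + (n:ℝ)) ^ d := hdetle
        _ = ((1:ℝ)/M) ^ d * (1 + M * n) ^ d := by
            rw [← mul_pow]
            congr 1
            field_simp
    refine h2.trans (pow_le_pow_left₀ (by positivity) (by nlinarith) d)
  -- sum of min bound
  have hminsum : ∑ t : Fin n, min 1 (w t) ≤ 2 * (d * Real.log (2 * M * n)) := by
    have hppos : (0:ℝ) < ∏ τ : Fin n, (1 + w τ) :=
      Finset.prod_pos fun τ _ => by have := hw0 τ; linarith
    calc ∑ t : Fin n, min 1 (w t) ≤ ∑ t : Fin n, 2 * Real.log (1 + w t) :=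
          Finset.sum_le_sum fun t _ => aux_min_le_two_log (hw0 t)
      _ = 2 * Real.log (∏ τ : Fin n, (1 + w τ)) := by
          rw [Real.log_prod (fun τ _ => by have := hw0 τ; positivity), Finset.mul_sum]
      _ ≤ 2 * Real.log ((2 * M * n) ^ d) := by
          have := Real.log_le_log hppos hprod
          linarith
      _ = 2 * (d * Real.log (2 * M * n)) := by rw [Real.log_pow]
  -- Cauchy-Schwarz step
  have hsum1 : c * n ≤ ∑ t : Fin n, min 1 (Real.sqrt (w t)) := by
    calc c * n = ∑ _t : Fin n, c := by
          rw [Finset.sum_const, Finset.card_univ, Fintype.card_fin, nsmul_eq_mul, mul_comm]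
      _ ≤ ∑ t : Fin n, min 1 (Real.sqrt (w t)) :=
          Finset.sum_le_sum fun t _ => (hclt t).le
  have hsq : (∑ t : Fin n, min 1 (Real.sqrt (w t))) ^ 2 ≤ n * ∑ t : Fin n, min 1 (w t) := by
    have h1 := sq_sum_le_card_mul_sum_sq (s := (Finset.univ : Finset (Fin n)))
      (f := fun t => min 1 (Real.sqrt (w t)))
    have h2 : ∀ t : Fin n, (min 1 (Real.sqrt (w t))) ^ 2 = min 1 (w t) := by
      intro t
      rcases le_total (w t) 1 with h | h
      · rw [min_eq_right (Real.sqrt_le_one.2 h), min_eq_right h, Real.sq_sqrt (hw0 t)]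
      · rw [min_eq_left (Real.one_le_sqrt.2 h), min_eq_left h, one_pow]
    calc (∑ t : Fin n, min 1 (Real.sqrt (w t))) ^ 2
        ≤ (Finset.univ : Finset (Fin n)).card * ∑ t : Fin n, (min 1 (Real.sqrt (w t))) ^ 2 := by
          exact_mod_cast h1
      _ = n * ∑ t : Fin n, min 1 (w t) := by
          rw [Finset.card_univ, Fintype.card_fin]
          congr 1
          exact Finset.sum_congr rfl fun t _ => h2 t
  -- conclude
  have hcn0 : 0 ≤ c * n := by positivity
  have hfinal : (c * n) ^ 2 ≤ 2 * d * n * Real.log (2 * M * n) := by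
    have h1 : (c * n) ^ 2 ≤ (∑ t : Fin n, min 1 (Real.sqrt (w t))) ^ 2 := by
      have hnn : 0 ≤ ∑ t : Fin n, min 1 (Real.sqrt (w t)) := le_trans hcn0 hsum1
      exact pow_le_pow_left₀ hcn0 hsum1 2
    calc (c * n) ^ 2 ≤ n * ∑ t : Fin n, min 1 (w t) := h1.trans hsq
      _ ≤ n * (2 * (d * Real.log (2 * M * n))) := by
          have : (0:ℝ) ≤ n := by linarith
          exact mul_le_mul_of_nonneg_left hminsum this
      _ = 2 * d * n * Real.log (2 * M * n) := by ring
  calc c * n = Real.sqrt ((c * n) ^ 2) := (Real.sqrt_sq hcn0).symm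
    _ ≤ Real.sqrt (2 * d * n * Real.log (2 * M * n)) := Real.sqrt_le_sqrt hfinal
end
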